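/- Four-term contiguous relation for bilateral series, first form: let a_1,…,a_r, b_1,…,b_m, c, d, g, h, t ∈ ℂ with c ≠ d, cq ≠ d, dq ≠ c, g ≠ q, h ≠ q, and assume every q-shifted factorial of integer index appearing below is defined and nonzero where it occurs in a denominator. For parameters (c',d';g',h') define the bilateral sum Ψ(c',d';g',h') = Σ_{k∈ℤ} [∏_{l=1}^{r}(a_l;q)_k · (c';q)_k (d';q)_k / (∏_{j=1}^{m}(b_j;q)_k · (g';q)_k (h';q)_k)] t^k, and assume each of the four bilateral sums below is absolutely summable. Set K₁ = (c−q)(d−q)(−gh − cdq + cgq + dgq + chq + dhq − ghq − cdq²)/((g−q)(h−q)(cq−d)(dq−c)), K₂ = (c−1)(d−g)(d−h)(c−q)q/((d−c)(g−q)(h−q)(cq−d)), K₃ = (d−1)(c−g)(c−h)(d−q)q/((c−d)(g−q)(h−q)(dq−c)). Then K₁·Ψ(c,d;g,h) + K₂·Ψ(cq,d/q;g,h) + K₃·Ψ(c/q,dq;g,h) + Ψ(c/q,d/q;g/q,h/q) = 0. -/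

import Mathlib

open Finset

noncomputable section

/-- Infinite q-shifted factorial `(a;q)_∞`. -/
def qpInf (q a : ℂ) : ℂ := ∏' j : ℕ, (1 - a * q ^ j)

/-- The q-shifted factorial `(a;q)_k` of integer index `k`,
`(a;q)_k = (a;q)_∞ / (a q^k;q)_∞`. -/
def qpz (q a : ℂ) (k : ℤ) : ℂ := qpInf q a / qpInf q (a * q ^ k)

/-- The `k`-th term of the bilateral basic hypergeometric series
with numerator parameters `a₁,…,a_r, c, d`, denominator parameters
`b₁,…,b_m, g, h` and argument `t`. -/
def biTerm (q t : ℂ) {r m : ℕ} (a : Fin r → ℂ) (b : Fin m → ℂ)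
    (c d g h : ℂ) (k : ℤ) : ℂ :=
  (∏ l, qpz q (a l) k) * qpz q c k * qpz q d k
    / ((∏ j, qpz q (b j) k) * qpz q g k * qpz q h k) * t ^ k

open Filter in
lemma qpMult (q a : ℂ) (hq1 : ‖q‖ < 1) :
    Multipliable (fun j : ℕ => 1 - a * q ^ j) := by
  by_cases hz : ∃ j : ℕ, 1 - a * q ^ j = 0
  · obtain ⟨j0, hj0⟩ := hz
    refine ⟨0, ?_⟩
    have hev : ∀ᶠ s : Finset ℕ in atTop, ∏ i ∈ s, (1 - a * q ^ i) = (0:ℂ) := by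
      filter_upwards [eventually_ge_atTop {j0}] with s hs
      exact Finset.prod_eq_zero (hs (Finset.mem_singleton_self j0)) hj0
    exact Tendsto.congr' (EventuallyEq.symm hev) tendsto_const_nhds
  · push_neg at hz
    refine Complex.multipliable_of_summable_log ?_
    have hgeo : Summable (fun n : ℕ => (3/2 : ℝ) * (‖a‖ * ‖q‖ ^ n)) :=
      ((summable_geometric_of_lt_one (norm_nonneg q) hq1).mul_left _).mul_left _
    apply Summable.of_norm_bounded_eventually hgeo
    rw [Nat.cofinite_eq_atTop]
    have htend : Tendsto (fun n : ℕ => ‖a‖ * ‖q‖ ^ n) atTop (nhds 0) := by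
      simpa using (tendsto_pow_atTop_nhds_zero_of_lt_one (norm_nonneg q) hq1).const_mul ‖a‖
    filter_upwards [htend.eventually_le_const (by norm_num : (0:ℝ) < 1/2)] with n hn
    have h2 : ‖-(a * q ^ n)‖ ≤ 1/2 := by
      rw [norm_neg, norm_mul, norm_pow]; exact hn
    have h3 := Complex.norm_log_one_add_half_le_self h2
    rw [show (1 : ℂ) + -(a * q ^ n) = 1 - a * q ^ n by ring] at h3
    calc ‖Complex.log (1 - a * q ^ n)‖ ≤ 3/2 * ‖-(a * q ^ n)‖ := h3
      _ = 3/2 * (‖a‖ * ‖q‖ ^ n) := by rw [norm_neg, norm_mul, norm_pow]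

lemma qpInf_rec (q a : ℂ) (hq1 : ‖q‖ < 1) :
    qpInf q a = (1 - a) * qpInf q (a * q) := by
  have hm : Multipliable (fun n : ℕ => 1 - a * q ^ (n + 1)) :=
    (qpMult q (a * q) hq1).congr fun n => by ring
  have hsplit := tprod_eq_zero_mul' (f := fun j : ℕ => 1 - a * q ^ j) hm
  rw [qpInf, hsplit]
  simp only [pow_zero, mul_one]
  congr 1
  unfold qpInf
  exact tprod_congr fun j => by ring

lemma one_sub_ne {q : ℂ} (hq1 : ‖q‖ < 1) {z : ℂ} (hz : qpInf q z ≠ 0) :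
    1 - z ≠ 0 := fun h0 => hz (by rw [qpInf_rec q z hq1, h0, zero_mul])

lemma qpz_num_ne {q a : ℂ} {k : ℤ} (h : qpz q a k ≠ 0) : qpInf q a ≠ 0 := by
  intro h0; exact h (by rw [qpz, h0, zero_div])

lemma qpz_den_ne {q a : ℂ} {k : ℤ} (h : qpz q a k ≠ 0) : qpInf q (a * q ^ k) ≠ 0 := by
  intro h0; exact h (by rw [qpz, h0, div_zero])

/-- The fundamental contiguous relation for `qpz`. -/
lemma qpz_shift (q a : ℂ) (hq1 : ‖q‖ < 1) (k : ℤ)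
    (h1 : qpInf q (a * q ^ k) ≠ 0) :
    (1 - a) * qpz q (a * q) k = (1 - a * q ^ k) * qpz q a k := by
  have hrec1 : qpInf q a = (1 - a) * qpInf q (a * q) := qpInf_rec q a hq1
  have hrec2 : qpInf q (a * q ^ k) = (1 - a * q ^ k) * qpInf q (a * q * q ^ k) := by
    rw [qpInf_rec q (a * q ^ k) hq1, show a * q ^ k * q = a * q * q ^ k by ring]
  have hx : (1 - a * q ^ k) ≠ 0 := one_sub_ne hq1 h1
  have h2 : qpInf q (a * q * q ^ k) ≠ 0 := by
    intro h0; exact h1 (by rw [hrec2, h0, mul_zero])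
  rw [qpz, qpz, hrec1, hrec2]
  field_simp


lemma qpz_shift_down (q a : ℂ) (hq : q ≠ 0) (hq1 : ‖q‖ < 1) (k : ℤ)
    (h1 : qpInf q ((a/q) * q ^ k) ≠ 0) :
    (q - a) * qpz q a k = (q - a * q ^ k) * qpz q (a/q) k := by
  have e := qpz_shift q (a/q) hq1 k h1
  rw [div_mul_cancel₀ a hq] at e
  have h2 : q * (1 - a/q) = q - a := by field_simp
  have h3 : q * (1 - a/q * q ^ k) = q - a * q ^ k := by field_simp
  calc (q - a) * qpz q a k = q * ((1 - a/q) * qpz q a k) := by rw [← h2]; ring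
    _ = q * ((1 - a/q * q ^ k) * qpz q (a/q) k) := by rw [e]
    _ = (q - a * q ^ k) * qpz q (a/q) k := by rw [← mul_assoc, h3]

set_option maxHeartbeats 1000000 in
lemma scalar_identity (q x c d g h : ℂ)
    (n1 : (1:ℂ)-c ≠ 0) (n2 : (1:ℂ)-d ≠ 0) (n3 : q-c*x ≠ 0) (n4 : q-d*x ≠ 0)
    (n5 : q-g ≠ 0) (n6 : q-h ≠ 0)
    (ncd : c-d ≠ 0) (ndc : d-c ≠ 0) (ncqd : c*q-d ≠ 0) (ndqc : d*q-c ≠ 0) :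
    (c-q)*(d-q)*(-(g*h) - c*d*q + c*g*q + d*g*q + c*h*q + d*h*q - g*h*q - c*d*q^2)
        / ((g-q)*(h-q)*(c*q-d)*(d*q-c))
      + (c-1)*(d-g)*(d-h)*(c-q)*q / ((d-c)*(g-q)*(h-q)*(c*q-d))
          * (((1-c*x)*(q-d))/((1-c)*(q-d*x)))
      + (d-1)*(c-g)*(c-h)*(d-q)*q / ((c-d)*(g-q)*(h-q)*(d*q-c))
          * (((q-c)*(1-d*x))/((q-c*x)*(1-d)))
      + ((q-c)*(q-d)*(q-g*x)*(q-h*x))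
          /((q-c*x)*(q-d*x)*(q-g)*(q-h)) = 0 := by
  have ngq : g - q ≠ 0 := fun h0 => n5 (by linear_combination -h0)
  have nhq : h - q ≠ 0 := fun h0 => n6 (by linear_combination -h0)
  set k1 := (c-q)*(d-q)*(-(g*h) - c*d*q + c*g*q + d*g*q + c*h*q + d*h*q - g*h*q - c*d*q^2)
        / ((g-q)*(h-q)*(c*q-d)*(d*q-c)) with hk1
  set k2 := (c-1)*(d-g)*(d-h)*(c-q)*q / ((d-c)*(g-q)*(h-q)*(c*q-d)) with hk2
  set k3 := (d-1)*(c-g)*(c-h)*(d-q)*q / ((c-d)*(g-q)*(h-q)*(d*q-c)) with hk3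
  set p2 := (d-g)*(d-h)*(c-q)*q*(q-d) / ((c-d)*(g-q)*(h-q)*(c*q-d)) with hp2
  set p3 := (c-g)*(c-h)*(d-q)*q*(q-c) / ((d-c)*(g-q)*(h-q)*(d*q-c)) with hp3
  set p4 := (q-c)*(q-d)/((g-q)*(h-q)) with hp4
  clear_value k1 k2 k3 p2 p3 p4
  have hD1 : (g-q)*(h-q)*(c*q-d)*(d*q-c) ≠ 0 :=
    mul_ne_zero (mul_ne_zero (mul_ne_zero ngq nhq) ncqd) ndqc
  have hD2 : (c-d)*(g-q)*(h-q)*(c*q-d) ≠ 0 :=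
    mul_ne_zero (mul_ne_zero (mul_ne_zero ncd ngq) nhq) ncqd
  have hD3 : (d-c)*(g-q)*(h-q)*(d*q-c) ≠ 0 :=
    mul_ne_zero (mul_ne_zero (mul_ne_zero ndc ngq) nhq) ndqc
  have hD4 : (g-q)*(h-q) ≠ 0 := mul_ne_zero ngq nhq
  have hD2L : (d-c)*(g-q)*(h-q)*(c*q-d) ≠ 0 :=
    mul_ne_zero (mul_ne_zero (mul_ne_zero ndc ngq) nhq) ncqd
  have hD3L : (c-d)*(g-q)*(h-q)*(d*q-c) ≠ 0 :=
    mul_ne_zero (mul_ne_zero (mul_ne_zero ncd ngq) nhq) ndqc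
  have hD : (g-q)*(h-q)*(c*q-d)*(d*q-c)*((d-c)*(c-d)) ≠ 0 :=
    mul_ne_zero hD1 (mul_ne_zero ndc ncd)
  have gen : ∀ (Nu De cof w DD : ℂ), De ≠ 0 → DD ≠ 0 → De * cof = DD →
      Nu / De * w = Nu * w * cof / DD := by
    intro Nu De cof w DD hDe hDD hfac
    rw [div_mul_eq_mul_div, div_eq_div_iff hDe hDD, ← hfac]
    ring
  have w1 : ∀ w : ℂ, k1 * w
      = (c-q)*(d-q)*(-(g*h) - c*d*q + c*g*q + d*g*q + c*h*q + d*h*q - g*h*q - c*d*q^2)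
        * w * ((d-c)*(c-d)) / ((g-q)*(h-q)*(c*q-d)*(d*q-c)*((d-c)*(c-d))) := fun w => by
    rw [hk1]; exact gen _ _ _ w _ hD1 hD (by ring)
  have w2 : ∀ w : ℂ, p2 * w
      = (d-g)*(d-h)*(c-q)*q*(q-d) * w * ((d*q-c)*(d-c))
          / ((g-q)*(h-q)*(c*q-d)*(d*q-c)*((d-c)*(c-d))) := fun w => by
    rw [hp2]; exact gen _ _ _ w _ hD2 hD (by ring)
  have w3 : ∀ w : ℂ, p3 * w
      = (c-g)*(c-h)*(d-q)*q*(q-c) * w * ((c*q-d)*(c-d))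
          / ((g-q)*(h-q)*(c*q-d)*(d*q-c)*((d-c)*(c-d))) := fun w => by
    rw [hp3]; exact gen _ _ _ w _ hD3 hD (by ring)
  have w4 : ∀ w : ℂ, p4 * w
      = (q-c)*(q-d) * w * ((c*q-d)*(d*q-c)*((d-c)*(c-d)))
          / ((g-q)*(h-q)*(c*q-d)*(d*q-c)*((d-c)*(c-d))) := fun w => by
    rw [hp4]; exact gen _ _ _ w _ hD4 hD (by ring)
  have A0 : k1*q^2 + p2*q + p3*q + p4*q^2 = 0 := by
    rw [w1 (q^2), w2 q, w3 q, w4 (q^2), ← add_div, ← add_div,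
      ← add_div, div_eq_zero_iff]
    left; ring
  have A1 : k1*((c+d)*q) + p2*(c*(1+q)) + p3*(d*(1+q)) + p4*((g+h)*q) = 0 := by
    rw [w1 ((c+d)*q), w2 (c*(1+q)), w3 (d*(1+q)), w4 ((g+h)*q), ← add_div,
      ← add_div, ← add_div, div_eq_zero_iff]
    left; ring
  have A2 : k1*(c*d) + p2*c^2 + p3*d^2 + p4*(g*h) = 0 := by
    rw [w1 (c*d), w2 (c^2), w3 (d^2), w4 (g*h), ← add_div, ← add_div,
      ← add_div, div_eq_zero_iff]
    left; ring
  have T2 : k2 * (((1-c*x)*(q-d))/((1-c)*(q-d*x))) = p2 * ((1-c*x)/(q-d*x)) := by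
    rw [hk2, hp2, div_mul_div_comm, div_mul_div_comm,
      div_eq_div_iff (mul_ne_zero hD2L (mul_ne_zero n1 n4)) (mul_ne_zero hD2 n4)]
    ring
  have T3 : k3 * (((q-c)*(1-d*x))/((q-c*x)*(1-d))) = p3 * ((1-d*x)/(q-c*x)) := by
    rw [hk3, hp3, div_mul_div_comm, div_mul_div_comm,
      div_eq_div_iff (mul_ne_zero hD3L (mul_ne_zero n3 n2)) (mul_ne_zero hD3 n3)]
    ring
  have T4 : ((q-c)*(q-d)*(q-g*x)*(q-h*x))/((q-c*x)*(q-d*x)*(q-g)*(q-h))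
      = p4 * (((q-g*x)*(q-h*x))/((q-c*x)*(q-d*x))) := by
    rw [hp4, div_mul_div_comm,
      div_eq_div_iff (mul_ne_zero (mul_ne_zero (mul_ne_zero n3 n4) n5) n6)
        (mul_ne_zero hD4 (mul_ne_zero n3 n4))]
    ring
  rw [T2, T3, T4]
  have G : k1*((q-c*x)*(q-d*x)) + p2*((1-c*x)*(q-c*x)) + p3*((1-d*x)*(q-d*x))
      + p4*((q-g*x)*(q-h*x)) = 0 := by
    linear_combination A0 - x * A1 + x^2 * A2
  have comb : k1 + p2 * ((1-c*x)/(q-d*x)) + p3 * ((1-d*x)/(q-c*x))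
      + p4 * (((q-g*x)*(q-h*x))/((q-c*x)*(q-d*x)))
      = (k1*((q-c*x)*(q-d*x)) + p2*((1-c*x)*(q-c*x)) + p3*((1-d*x)*(q-d*x))
          + p4*((q-g*x)*(q-h*x)))/((q-c*x)*(q-d*x)) := by
    have n3' : q - x * c ≠ 0 := by rwa [mul_comm x c]
    have n4' : q - x * d ≠ 0 := by rwa [mul_comm x d]
    field_simp
  rw [comb, G, zero_div]

set_option maxHeartbeats 2000000 in
/-- four-term contiguous relation for bilateral basic
hypergeometric series, first form. -/
theorem four_term_contiguous_bilateral_first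
    (q t : ℂ) (hq0 : 0 < ‖q‖) (hq1 : ‖q‖ < 1)
    (r m : ℕ) (a : Fin r → ℂ) (b : Fin m → ℂ) (c d g h : ℂ)
    (hcd : c ≠ d) (hcqd : c*q ≠ d) (hdqc : d*q ≠ c) (hg : g ≠ q) (hh : h ≠ q)
    (hadef : ∀ (l : Fin r) (k : ℤ), qpInf q (a l * q ^ k) ≠ 0)
    (hcdef : ∀ k : ℤ, qpInf q (c * q ^ k) ≠ 0)
    (hddef : ∀ k : ℤ, qpInf q (d * q ^ k) ≠ 0)
    (hbden : ∀ (j : Fin m) (k : ℤ), qpz q (b j) k ≠ 0)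
    (hgden : ∀ k : ℤ, qpz q g k ≠ 0) (hhden : ∀ k : ℤ, qpz q h k ≠ 0)
    (hgqden : ∀ k : ℤ, qpz q (g/q) k ≠ 0) (hhqden : ∀ k : ℤ, qpz q (h/q) k ≠ 0)
    (hs1 : Summable fun k : ℤ => ‖biTerm q t a b c d g h k‖)
    (hs2 : Summable fun k : ℤ => ‖biTerm q t a b (c*q) (d/q) g h k‖)
    (hs3 : Summable fun k : ℤ => ‖biTerm q t a b (c/q) (d*q) g h k‖)
    (hs4 : Summable fun k : ℤ => ‖biTerm q t a b (c/q) (d/q) (g/q) (h/q) k‖) :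
    (c-q)*(d-q)*(-(g*h) - c*d*q + c*g*q + d*g*q + c*h*q + d*h*q - g*h*q - c*d*q^2)
        / ((g-q)*(h-q)*(c*q-d)*(d*q-c)) * (∑' k : ℤ, biTerm q t a b c d g h k)
      + (c-1)*(d-g)*(d-h)*(c-q)*q / ((d-c)*(g-q)*(h-q)*(c*q-d))
          * (∑' k : ℤ, biTerm q t a b (c*q) (d/q) g h k)
      + (d-1)*(c-g)*(c-h)*(d-q)*q / ((c-d)*(g-q)*(h-q)*(d*q-c))
          * (∑' k : ℤ, biTerm q t a b (c/q) (d*q) g h k)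
      + (∑' k : ℤ, biTerm q t a b (c/q) (d/q) (g/q) (h/q) k) = 0 := by
  have hq : q ≠ 0 := by
    intro h0; rw [h0] at hq0; simp at hq0
  set K₁ : ℂ := (c-q)*(d-q)*(-(g*h) - c*d*q + c*g*q + d*g*q + c*h*q + d*h*q - g*h*q - c*d*q^2)
        / ((g-q)*(h-q)*(c*q-d)*(d*q-c)) with hK1
  set K₂ : ℂ := (c-1)*(d-g)*(d-h)*(c-q)*q / ((d-c)*(g-q)*(h-q)*(c*q-d)) with hK2
  set K₃ : ℂ := (d-1)*(c-g)*(c-h)*(d-q)*q / ((c-d)*(g-q)*(h-q)*(d*q-c)) with hK3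
  have key : ∀ k : ℤ, K₁ * biTerm q t a b c d g h k
      + K₂ * biTerm q t a b (c*q) (d/q) g h k
      + K₃ * biTerm q t a b (c/q) (d*q) g h k
      + biTerm q t a b (c/q) (d/q) (g/q) (h/q) k = 0 := by
    intro k
    have hcq : qpInf q ((c/q) * q ^ k) ≠ 0 := by
      have e : (c/q) * q ^ k = c * q ^ (k-1) := by
        rw [zpow_sub₀ hq, zpow_one]; ring
      rw [e]; exact hcdef (k-1)
    have hdq : qpInf q ((d/q) * q ^ k) ≠ 0 := by
      have e : (d/q) * q ^ k = d * q ^ (k-1) := by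
        rw [zpow_sub₀ hq, zpow_one]; ring
      rw [e]; exact hddef (k-1)
    have e1 := qpz_shift q c hq1 k (hcdef k)
    have e4 := qpz_shift q d hq1 k (hddef k)
    have e3 := qpz_shift_down q c hq hq1 k hcq
    have e2 := qpz_shift_down q d hq hq1 k hdq
    have e5 := qpz_shift_down q g hq hq1 k (qpz_den_ne (hgqden k))
    have e6 := qpz_shift_down q h hq hq1 k (qpz_den_ne (hhqden k))
    have n1 : (1 : ℂ) - c ≠ 0 := by
      have hc0 := hcdef 0; rw [zpow_zero, mul_one] at hc0; exact one_sub_ne hq1 hc0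
    have n2 : (1 : ℂ) - d ≠ 0 := by
      have hd0 := hddef 0; rw [zpow_zero, mul_one] at hd0; exact one_sub_ne hq1 hd0
    have n3 : q - c * q ^ k ≠ 0 := by
      have m3 : (1:ℂ) - (c/q) * q ^ k ≠ 0 := one_sub_ne hq1 hcq
      have e : q * (1 - (c/q) * q ^ k) = q - c * q ^ k := by field_simp
      rw [← e]; exact mul_ne_zero hq m3
    have n4 : q - d * q ^ k ≠ 0 := by
      have m4 : (1:ℂ) - (d/q) * q ^ k ≠ 0 := one_sub_ne hq1 hdq
      have e : q * (1 - (d/q) * q ^ k) = q - d * q ^ k := by field_simp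
      rw [← e]; exact mul_ne_zero hq m4
    have n5 : q - g ≠ 0 := by
      have m : (1:ℂ) - g/q ≠ 0 := one_sub_ne hq1 (qpz_num_ne (hgqden 0))
      have e : q * (1 - g/q) = q - g := by field_simp
      rw [← e]; exact mul_ne_zero hq m
    have n6 : q - h ≠ 0 := by
      have m : (1:ℂ) - h/q ≠ 0 := one_sub_ne hq1 (qpz_num_ne (hhqden 0))
      have e : q * (1 - h/q) = q - h := by field_simp
      rw [← e]; exact mul_ne_zero hq m
    have n7 : q - g * q ^ k ≠ 0 := by
      have m : (1:ℂ) - (g/q) * q ^ k ≠ 0 := one_sub_ne hq1 (qpz_den_ne (hgqden k))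
      have e : q * (1 - (g/q) * q ^ k) = q - g * q ^ k := by field_simp
      rw [← e]; exact mul_ne_zero hq m
    have n8 : q - h * q ^ k ≠ 0 := by
      have m : (1:ℂ) - (h/q) * q ^ k ≠ 0 := one_sub_ne hq1 (qpz_den_ne (hhqden k))
      have e : q * (1 - (h/q) * q ^ k) = q - h * q ^ k := by field_simp
      rw [← e]; exact mul_ne_zero hq m
    have nG : qpz q g k ≠ 0 := hgden k
    have nH : qpz q h k ≠ 0 := hhden k
    have nB : (∏ j, qpz q (b j) k) ≠ 0 :=
      Finset.prod_ne_zero_iff.mpr (fun j _ => hbden j k)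
    have ngq : g - q ≠ 0 := sub_ne_zero.mpr hg
    have nhq : h - q ≠ 0 := sub_ne_zero.mpr hh
    have ncd : c - d ≠ 0 := sub_ne_zero.mpr hcd
    have ndc : d - c ≠ 0 := sub_ne_zero.mpr hcd.symm
    have ncqd : c*q - d ≠ 0 := sub_ne_zero.mpr hcqd
    have ndqc : d*q - c ≠ 0 := sub_ne_zero.mpr hdqc
    have E1 : qpz q (c*q) k = (1 - c * q ^ k) * qpz q c k / (1 - c) := by
      rw [eq_div_iff n1]; linear_combination e1
    have E4 : qpz q (d*q) k = (1 - d * q ^ k) * qpz q d k / (1 - d) := by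
      rw [eq_div_iff n2]; linear_combination e4
    have E3 : qpz q (c/q) k = (q - c) * qpz q c k / (q - c * q ^ k) := by
      rw [eq_div_iff n3]; linear_combination -e3
    have E2 : qpz q (d/q) k = (q - d) * qpz q d k / (q - d * q ^ k) := by
      rw [eq_div_iff n4]; linear_combination -e2
    have E5 : qpz q (g/q) k = (q - g) * qpz q g k / (q - g * q ^ k) := by
      rw [eq_div_iff n7]; linear_combination -e5
    have E6 : qpz q (h/q) k = (q - h) * qpz q h k / (q - h * q ^ k) := by
      rw [eq_div_iff n8]; linear_combination -e6
    have R2 : biTerm q t a b (c*q) (d/q) g h k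
        = (((1-c*q^k)*(q-d))/((1-c)*(q-d*q^k))) * biTerm q t a b c d g h k := by
      unfold biTerm
      rw [E1, E2]
      field_simp
    have R3 : biTerm q t a b (c/q) (d*q) g h k
        = (((q-c)*(1-d*q^k))/((q-c*q^k)*(1-d))) * biTerm q t a b c d g h k := by
      unfold biTerm
      rw [E3, E4]
      field_simp
    have R4 : biTerm q t a b (c/q) (d/q) (g/q) (h/q) k
        = (((q-c)*(q-d)*(q-g*q^k)*(q-h*q^k))
            /((q-c*q^k)*(q-d*q^k)*(q-g)*(q-h))) * biTerm q t a b c d g h k := by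
      unfold biTerm
      rw [E3, E2, E5, E6]
      field_simp
    have hsc := scalar_identity q (q^k) c d g h n1 n2 n3 n4 n5 n6 ncd ndc ncqd ndqc
    rw [R2, R3, R4, hK1, hK2, hK3]
    calc (c-q)*(d-q)*(-(g*h) - c*d*q + c*g*q + d*g*q + c*h*q + d*h*q - g*h*q - c*d*q^2)
        / ((g-q)*(h-q)*(c*q-d)*(d*q-c)) * biTerm q t a b c d g h k
      + (c-1)*(d-g)*(d-h)*(c-q)*q / ((d-c)*(g-q)*(h-q)*(c*q-d))
          * ((((1-c*q^k)*(q-d))/((1-c)*(q-d*q^k))) * biTerm q t a b c d g h k)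
      + (d-1)*(c-g)*(c-h)*(d-q)*q / ((c-d)*(g-q)*(h-q)*(d*q-c))
          * ((((q-c)*(1-d*q^k))/((q-c*q^k)*(1-d))) * biTerm q t a b c d g h k)
      + (((q-c)*(q-d)*(q-g*q^k)*(q-h*q^k))
            /((q-c*q^k)*(q-d*q^k)*(q-g)*(q-h))) * biTerm q t a b c d g h k
        = ((c-q)*(d-q)*(-(g*h) - c*d*q + c*g*q + d*g*q + c*h*q + d*h*q - g*h*q - c*d*q^2)
            / ((g-q)*(h-q)*(c*q-d)*(d*q-c))
          + (c-1)*(d-g)*(d-h)*(c-q)*q / ((d-c)*(g-q)*(h-q)*(c*q-d))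
              * (((1-c*q^k)*(q-d))/((1-c)*(q-d*q^k)))
          + (d-1)*(c-g)*(c-h)*(d-q)*q / ((c-d)*(g-q)*(h-q)*(d*q-c))
              * (((q-c)*(1-d*q^k))/((q-c*q^k)*(1-d)))
          + ((q-c)*(q-d)*(q-g*q^k)*(q-h*q^k))
              /((q-c*q^k)*(q-d*q^k)*(q-g)*(q-h))) * biTerm q t a b c d g h k := by
          ring
      _ = 0 * biTerm q t a b c d g h k := by rw [hsc]
      _ = 0 := zero_mul _
  have h1 : Summable (fun k : ℤ => biTerm q t a b c d g h k) := hs1.of_norm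
  have h2 : Summable (fun k : ℤ => biTerm q t a b (c*q) (d/q) g h k) := hs2.of_norm
  have h3 : Summable (fun k : ℤ => biTerm q t a b (c/q) (d*q) g h k) := hs3.of_norm
  have h4 : Summable (fun k : ℤ => biTerm q t a b (c/q) (d/q) (g/q) (h/q) k) := hs4.of_norm
  have H : HasSum (fun k : ℤ => K₁ * biTerm q t a b c d g h k
      + K₂ * biTerm q t a b (c*q) (d/q) g h k
      + K₃ * biTerm q t a b (c/q) (d*q) g h k
      + biTerm q t a b (c/q) (d/q) (g/q) (h/q) k)
      (K₁ * (∑' k : ℤ, biTerm q t a b c d g h k)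
        + K₂ * (∑' k : ℤ, biTerm q t a b (c*q) (d/q) g h k)
        + K₃ * (∑' k : ℤ, biTerm q t a b (c/q) (d*q) g h k)
        + (∑' k : ℤ, biTerm q t a b (c/q) (d/q) (g/q) (h/q) k)) :=
    (((h1.hasSum.mul_left K₁).add (h2.hasSum.mul_left K₂)).add
      (h3.hasSum.mul_left K₃)).add h4.hasSum
  have H0 : HasSum (fun k : ℤ => K₁ * biTerm q t a b c d g h k
      + K₂ * biTerm q t a b (c*q) (d/q) g h k
      + K₃ * biTerm q t a b (c/q) (d*q) g h k
      + biTerm q t a b (c/q) (d/q) (g/q) (h/q) k) 0 := by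
    rw [funext key]; exact hasSum_zero
  exact H.unique H0
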